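/- A discrete random variable X has support of cardinality at most 2 if and only if every random variable U that is almost surely a function of X but such that X is not almost surely a function of U, is almost surely constant. -/

import Mathlib

open MeasureTheory ProbabilityTheory
open scoped ENNReal

theorem stmt2 {Ω : Type} [MeasurableSpace Ω] (μ : Measure Ω) [IsProbabilityMeasure μ]
    (X : Ω → ℕ) (hX : Measurable X) :
    {x | μ (X ⁻¹' {x}) ≠ 0}.encard ≤ 2 ↔
      ∀ U : Ω → ℕ, Measurable U → (∃ f : ℕ → ℕ, U =ᵐ[μ] fun ω => f (X ω)) →
        ¬(∃ g : ℕ → ℕ, X =ᵐ[μ] fun ω => g (U ω)) →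
        ∃ c, μ {ω | U ω = c} = 1 := by
  set S : Set ℕ := {x | μ (X ⁻¹' {x}) ≠ 0} with hSdef
  -- a.e., X ω ∈ S
  have haeS : ∀ᵐ ω ∂μ, X ω ∈ S := by
    have : μ {ω | X ω ∉ S} = 0 := by
      have : {ω | X ω ∉ S} = ⋃ x ∈ Sᶜ, X ⁻¹' {x} := by
        ext ω; simp [Set.mem_iUnion]
      rw [this, measure_biUnion_null_iff (Set.to_countable _)]
      intro x hx
      simpa [hSdef] using hx
    exact this
  constructor
  · intro hS U hU ⟨f, hf⟩ hg
    by_cases hinj : Set.InjOn f S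
    · -- then X is a.e. a function of U, contradiction
      exfalso
      apply hg
      refine ⟨Function.invFunOn f S, ?_⟩
      filter_upwards [hf, haeS] with ω hfω hωS
      rw [hfω]
      exact (hinj.leftInvOn_invFunOn hωS).symm
    · -- f not injective on S
      rw [Set.InjOn] at hinj
      push_neg at hinj
      obtain ⟨x1, hx1, x2, hx2, hfx, hne⟩ := hinj
      -- S ⊆ {x1, x2}
      have hsub : S ⊆ {x1, x2} := by
        intro y hy
        by_contra hy'
        have h3 : ({y, x1, x2} : Set ℕ).encard = 3 := by
          rw [Set.encard_insert_of_notMem (by simpa using hy'), Set.encard_pair hne]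
          rfl
        have : ({y, x1, x2} : Set ℕ).encard ≤ 2 :=
          le_trans (Set.encard_mono (by
            intro z hz
            rcases hz with rfl | rfl | rfl <;> assumption)) hS
        rw [h3] at this
        exact absurd this (by decide)
      refine ⟨f x1, ?_⟩
      have hae : ∀ᵐ ω ∂μ, U ω = f x1 := by
        filter_upwards [hf, haeS] with ω hfω hωS
        rcases hsub hωS with h | h
        · rw [hfω, h]
        · rw [hfω, h, hfx]
      show μ (U ⁻¹' {f x1}) = 1
      rw [← prob_compl_eq_zero_iff (hU (MeasurableSet.singleton (f x1)))]
      rw [ae_iff] at hae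
      exact hae
  · intro h
    by_contra hS
    push_neg at hS
    -- get three distinct elements of S
    obtain ⟨x1, x2, hx1, hx2, h12⟩ := Set.one_lt_encard_iff.1 (lt_of_le_of_lt (by norm_num) hS)
    have : ¬ S ⊆ {x1, x2} := by
      intro hsub
      exact absurd (le_trans (Set.encard_mono hsub) (le_of_eq (Set.encard_pair h12))) (not_le.2 hS)
    obtain ⟨x3, hx3, hx3'⟩ := Set.not_subset.1 this
    have h13 : x3 ≠ x1 := fun h => hx3' (by simp [h])
    have h23 : x3 ≠ x2 := fun h => hx3' (by simp [h])
    set U : Ω → ℕ := fun ω => if X ω = x1 then 0 else 1 with hUdef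
    have hUmeas : Measurable U := by
      have : U = (fun y => if y = x1 then 0 else 1) ∘ X := rfl
      rw [this]
      exact (measurable_from_top).comp hX
    have hfU : ∃ f : ℕ → ℕ, U =ᵐ[μ] fun ω => f (X ω) :=
      ⟨fun y => if y = x1 then 0 else 1, Filter.Eventually.of_forall fun ω => rfl⟩
    have hgU : ¬(∃ g : ℕ → ℕ, X =ᵐ[μ] fun ω => g (U ω)) := by
      rintro ⟨g, hg⟩
      have key : ∀ x : ℕ, x ∈ S → x ≠ x1 → g 1 = x := by
        intro x hxS hxne
        by_contra hgx
        have : μ (X ⁻¹' {x}) = 0 := by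
          have hsub : X ⁻¹' {x} ⊆ {ω | ¬ X ω = g (U ω)} := by
            intro ω hω
            simp only [Set.mem_preimage, Set.mem_singleton_iff] at hω
            simp only [Set.mem_setOf_eq, hUdef, hω, if_neg hxne]
            exact fun h => hgx h.symm
          exact measure_mono_null hsub (ae_iff.1 hg)
        exact hxS this
      have e2 : g 1 = x2 := key x2 hx2 (Ne.symm h12)
      have e3 : g 1 = x3 := key x3 hx3 h13
      exact h23 (e3.symm.trans e2)
    obtain ⟨c, hc⟩ := h U hUmeas hfU hgU
    -- but U is not a.e. constant
    have hc' : μ {ω | U ω = c}ᶜ = 0 := by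
      rw [← prob_compl_eq_zero_iff] at hc
      · exact hc
      · exact hUmeas (MeasurableSet.singleton c)
    rcases Nat.eq_zero_or_pos c with rfl | hcpos
    · -- {X = x2} ⊆ {U ≠ 0}
      apply hx2
      apply measure_mono_null _ hc'
      intro ω hω
      simp only [Set.mem_preimage, Set.mem_singleton_iff] at hω
      simp only [Set.mem_compl_iff, Set.mem_setOf_eq, hUdef, hω, if_neg (Ne.symm h12)]
      exact one_ne_zero
    · apply hx1
      apply measure_mono_null _ hc'
      intro ω hω
      simp only [Set.mem_preimage, Set.mem_singleton_iff] at hω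
      show ¬ (if X ω = x1 then 0 else 1) = c
      rw [if_pos hω]
      omega
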